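/- Any favored-agent mechanism with favored agent i* ∈ argmax_i μ̲_i and threshold ν* ≥ t̄_{i*} achieves payoff at least t_{i*} in every scenario t ∈ 𝒯, and hence its worst-case expected payoff over the Markov ambiguity set is at least max_i μ̲_i, so it is optimal. -/

import Mathlib

open MeasureTheory

/-- The type space: every coordinate lies in `[tlo i, thi i]`. -/
def InT {ι : Type*} (tlo thi : ι → ℝ) (t : ι → ℝ) : Prop :=
  ∀ i, t i ∈ Set.Icc (tlo i) (thi i)

/-- Membership in the Markov ambiguity set: a probability distribution supported on the
type space whose marginal means lie in `[mlo i, mhi i]`. -/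
def InP {ι : Type*} [Fintype ι] (tlo thi mlo mhi : ι → ℝ) (P : Measure (ι → ℝ)) : Prop :=
  IsProbabilityMeasure P ∧ (∀ᵐ t ∂P, InT tlo thi t) ∧
    ∀ i, ∫ t, t i ∂P ∈ Set.Icc (mlo i) (mhi i)

/-- The principal's payoff in scenario `t`. -/
def Pay {ι : Type*} [Fintype ι] (c : ι → ℝ) (p q : (ι → ℝ) → ι → ℝ) (t : ι → ℝ) : ℝ :=
  ∑ i, (p t i * t i - q t i * c i)

/-- Feasibility: values in `[0,1]`, `q ≤ p`, and total allocation at most one, on the type space. -/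
def Feas {ι : Type*} [Fintype ι] (tlo thi : ι → ℝ) (p q : (ι → ℝ) → ι → ℝ) : Prop :=
  ∀ t, InT tlo thi t →
    (∀ i, 0 ≤ q t i ∧ q t i ≤ p t i ∧ p t i ≤ 1) ∧ ∑ i, p t i ≤ 1

/-- Incentive compatibility: no agent gains by misreporting his type. -/
def IC {ι : Type*} [DecidableEq ι] (tlo thi : ι → ℝ) (p q : (ι → ℝ) → ι → ℝ) : Prop :=
  ∀ i, ∀ t, InT tlo thi t → ∀ s ∈ Set.Icc (tlo i) (thi i),
    p (Function.update t i s) i - q (Function.update t i s) i ≤ p t i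

/-- The quantity `max_{i ≠ i*} (t_i - c_i)`. -/
noncomputable def maxOther {ι : Type*} (c : ι → ℝ) (istar : ι) (t : ι → ℝ) : ℝ :=
  ⨆ j : {j : ι // j ≠ istar}, (t j.1 - c j.1)

/-- Rule (i) of a favored-agent mechanism at scenario `t`: the favored agent `i*` receives
the good with probability one and nobody is inspected. -/
def RuleI {ι : Type*} (istar : ι) (p q : (ι → ℝ) → ι → ℝ) (t : ι → ℝ) : Prop :=
  p t istar = 1 ∧ q t istar = 0 ∧ ∀ i, i ≠ istar → p t i = 0 ∧ q t i = 0

/-- Rule (ii) of a favored-agent mechanism at scenario `t`: the lexicographically smallest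
agent maximizing `t_i - c_i` receives the good and is inspected with probability one. -/
def RuleII {ι : Type*} [LinearOrder ι] (c : ι → ℝ) (p q : (ι → ℝ) → ι → ℝ)
    (t : ι → ℝ) : Prop :=
  ∃ i', (∀ i, t i - c i ≤ t i' - c i') ∧ (∀ i, t i - c i = t i' - c i' → i' ≤ i) ∧
    p t i' = 1 ∧ q t i' = 1 ∧ ∀ i, i ≠ i' → p t i = 0 ∧ q t i = 0

/-- A favored-agent mechanism with favored agent `i*` and threshold `ν`: rule (i) applies
whenever `max_{i ≠ i*}(t_i - c_i) < ν`, rule (ii) applies whenever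
`max_{i ≠ i*}(t_i - c_i) > ν`, and at ties one of the two rules is used throughout
(type (i) or type (ii) mechanisms). -/
def IsFA {ι : Type*} [Fintype ι] [LinearOrder ι] (tlo thi c : ι → ℝ) (istar : ι) (ν : ℝ)
    (p q : (ι → ℝ) → ι → ℝ) : Prop :=
  (∀ t, InT tlo thi t → maxOther c istar t < ν → RuleI istar p q t) ∧
  (∀ t, InT tlo thi t → ν < maxOther c istar t → RuleII c p q t) ∧
  ((∀ t, InT tlo thi t → maxOther c istar t = ν → RuleI istar p q t) ∨
    (∀ t, InT tlo thi t → maxOther c istar t = ν → RuleII c p q t))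

lemma pay_ruleI {ι : Type*} [Fintype ι] (c : ι → ℝ) (p q : (ι → ℝ) → ι → ℝ)
    (istar : ι) (t : ι → ℝ) (h : RuleI istar p q t) : Pay c p q t = t istar := by
  classical
  unfold Pay
  rw [Finset.sum_eq_single istar]
  · rw [h.1, h.2.1]; ring
  · intro i _ hi; rw [(h.2.2 i hi).1, (h.2.2 i hi).2]; ring
  · intro h'; exact absurd (Finset.mem_univ istar) h'

lemma pay_ruleII {ι : Type*} [Fintype ι] [Nonempty ι] [LinearOrder ι] (c : ι → ℝ)
    (p q : (ι → ℝ) → ι → ℝ) (t : ι → ℝ) (h : RuleII c p q t) :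
    Pay c p q t = Finset.univ.sup' (Finset.univ_nonempty (α := ι)) (fun i => t i - c i) := by
  classical
  obtain ⟨i', hmax, _, hp, hq, hz⟩ := h
  have : Pay c p q t = t i' - c i' := by
    unfold Pay
    rw [Finset.sum_eq_single i']
    · rw [hp, hq]; ring
    · intro i _ hi; rw [(hz i hi).1, (hz i hi).2]; ring
    · intro h'; exact absurd (Finset.mem_univ i') h'
  rw [this]
  refine le_antisymm (Finset.le_sup' (fun i => t i - c i) (Finset.mem_univ i')) ?_
  exact Finset.sup'_le _ _ fun i _ => hmax i

lemma maxOther_eq {ι : Type*} [Fintype ι] [Nontrivial ι] [DecidableEq ι]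
    (c : ι → ℝ) (istar : ι) (t : ι → ℝ)
    (hne : (Finset.univ.erase istar).Nonempty) :
    maxOther c istar t = (Finset.univ.erase istar).sup' hne (fun j => t j - c j) := by
  obtain ⟨j₀, hj₀⟩ := hne
  have hnty : Nonempty {j : ι // j ≠ istar} := ⟨⟨j₀, (Finset.mem_erase.1 hj₀).1⟩⟩
  refine le_antisymm (ciSup_le fun j => Finset.le_sup' (fun j => t j - c j) (Finset.mem_erase.2 ⟨j.2, Finset.mem_univ _⟩)) ?_
  refine Finset.sup'_le _ _ fun j hj => ?_
  exact le_ciSup (f := fun j : {j : ι // j ≠ istar} => t j.1 - c j.1) (Set.Finite.bddAbove (Set.finite_range _)) ⟨j, (Finset.mem_erase.1 hj).1⟩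

lemma maxOther_le {ι : Type*} [Nontrivial ι] (c : ι → ℝ) (istar : ι) (t : ι → ℝ)
    {a : ℝ} (h : ∀ j, j ≠ istar → t j - c j ≤ a) : maxOther c istar t ≤ a := by
  obtain ⟨j₀, hj₀⟩ := exists_ne istar
  have hnty : Nonempty {j : ι // j ≠ istar} := ⟨⟨j₀, hj₀⟩⟩
  exact ciSup_le fun j => h j.1 j.2

/-- Any favored-agent mechanism with favored agent `i* ∈ argmax_i μ̲_i`
and threshold `ν ≥ t̄_{i*}` achieves payoff at least `t_{i*}` in every scenario `t ∈ 𝒯`;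
hence its expected payoff under every distribution in the Markov ambiguity set is at least
`max_i μ̲_i`, and its worst-case expected payoff equals this optimal value, so it is
optimal. -/
theorem stmt_11 {ι : Type*} [Fintype ι] [Nontrivial ι] [LinearOrder ι]
    (tlo thi mlo mhi c : ι → ℝ)
    (h0 : ∀ i, 0 ≤ tlo i) (h1 : ∀ i, tlo i < mlo i) (h2 : ∀ i, mlo i ≤ mhi i)
    (h3 : ∀ i, mhi i < thi i) (hc : ∀ i, 0 < c i)
    (istar : ι) (hstar : ∀ i, mlo i ≤ mlo istar)
    (ν : ℝ) (hν : thi istar ≤ ν)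
    (p q : (ι → ℝ) → ι → ℝ) (hfa : IsFA tlo thi c istar ν p q) :
    (∀ t, InT tlo thi t → t istar ≤ Pay c p q t) ∧
    (∀ P : Measure (ι → ℝ), InP tlo thi mlo mhi P →
      Finset.univ.sup' Finset.univ_nonempty mlo ≤ ∫ t, Pay c p q t ∂P) ∧
    sInf {x : ℝ | ∃ P : Measure (ι → ℝ), InP tlo thi mlo mhi P ∧
        x = ∫ t, Pay c p q t ∂P} =
      Finset.univ.sup' Finset.univ_nonempty mlo := by
  classical
  obtain ⟨hI, hII, hTie⟩ := hfa
  -- the full max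
  set M : (ι → ℝ) → ℝ :=
    fun t => Finset.univ.sup' Finset.univ_nonempty (fun i => t i - c i) with hM_def
  have hM_meas : Measurable M := by
    have hMf : M = Finset.univ.sup' Finset.univ_nonempty
        (fun i => fun t : ι → ℝ => t i - c i) := by
      funext t
      rw [Finset.sup'_apply]
    rw [hMf]
    exact Finset.measurable_sup' Finset.univ_nonempty fun i _ =>
      (measurable_pi_apply i).sub measurable_const
  have hMO_meas : Measurable (maxOther c istar) := by
    obtain ⟨j₀, hj₀⟩ := exists_ne istar
    have hne : (Finset.univ.erase istar).Nonempty :=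
      ⟨j₀, Finset.mem_erase.2 ⟨hj₀, Finset.mem_univ _⟩⟩
    have : maxOther c istar = fun t => (Finset.univ.erase istar).sup' hne (fun j => t j - c j) :=
      funext fun t => maxOther_eq c istar t hne
    rw [this]
    have hMf : (fun t : ι → ℝ => (Finset.univ.erase istar).sup' hne (fun j => t j - c j))
        = (Finset.univ.erase istar).sup' hne (fun j => fun t : ι → ℝ => t j - c j) := by
      funext t
      rw [Finset.sup'_apply]
    rw [hMf]
    exact Finset.measurable_sup' hne fun i _ => (measurable_pi_apply i).sub measurable_const
  have hMO_le_M : ∀ t, maxOther c istar t ≤ M t :=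
    fun t => maxOther_le c istar t fun j _ => Finset.le_sup' (fun i => t i - c i) (Finset.mem_univ j)
  -- a measurable "rule I region"
  obtain ⟨S, hSmeas, hSI, hSII, hSν⟩ :
      ∃ S : Set (ι → ℝ), MeasurableSet S ∧
        (∀ t, InT tlo thi t → t ∈ S → RuleI istar p q t) ∧
        (∀ t, InT tlo thi t → t ∉ S → RuleII c p q t) ∧
        (∀ t, t ∉ S → ν ≤ maxOther c istar t) := by
    rcases hTie with hT | hT
    · refine ⟨{t | maxOther c istar t ≤ ν}, measurableSet_le hMO_meas measurable_const,
        ?_, ?_, ?_⟩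
      · intro t ht hmem
        have hmem' : maxOther c istar t ≤ ν := hmem
        rcases lt_or_eq_of_le hmem' with h | h
        · exact hI t ht h
        · exact hT t ht h
      · intro t ht hmem
        exact hII t ht (lt_of_not_ge hmem)
      · intro t hmem
        exact le_of_lt (lt_of_not_ge hmem)
    · refine ⟨{t | maxOther c istar t < ν}, measurableSet_lt hMO_meas measurable_const,
        ?_, ?_, ?_⟩
      · intro t ht hmem; exact hI t ht hmem
      · intro t ht hmem
        have hmem' : ¬ maxOther c istar t < ν := hmem
        rcases eq_or_lt_of_le (le_of_not_gt hmem') with h | h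
        · exact hT t ht h.symm
        · exact hII t ht h
      · intro t hmem
        have hmem' : ¬ maxOther c istar t < ν := hmem
        exact le_of_not_gt hmem'
  -- the measurable payoff representative
  set g : (ι → ℝ) → ℝ := S.piecewise (fun t => t istar) M with hg_def
  have hg_meas : Measurable g :=
    Measurable.piecewise hSmeas (measurable_pi_apply istar) hM_meas
  have hkey : ∀ t, InT tlo thi t → Pay c p q t = g t ∧ t istar ≤ g t := by
    intro t ht
    by_cases hmem : t ∈ S
    · have := pay_ruleI c p q istar t (hSI t ht hmem)
      simp [hg_def, Set.piecewise, hmem, this]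
    · have hP : Pay c p q t = M t := pay_ruleII c p q t (hSII t ht hmem)
      have hge : t istar ≤ M t :=
        le_trans (le_trans (ht istar).2 hν) (le_trans (hSν t hmem) (hMO_le_M t))
      simp [hg_def, Set.piecewise, hmem, hP, hge]
  have part1 : ∀ t, InT tlo thi t → t istar ≤ Pay c p q t := by
    intro t ht
    rw [(hkey t ht).1]
    exact (hkey t ht).2
  -- bound constant
  set C : ℝ := Finset.univ.sup' Finset.univ_nonempty (fun i => |tlo i| + |thi i| + |c i|)
    with hC_def
  have habs : ∀ t, InT tlo thi t → ∀ i, |t i| ≤ |tlo i| + |thi i| := by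
    intro t ht i
    rw [abs_le]
    constructor
    · have := (ht i).1
      nlinarith [neg_abs_le (tlo i), abs_nonneg (thi i)]
    · have := (ht i).2
      nlinarith [le_abs_self (thi i), abs_nonneg (tlo i)]
  have hgbound : ∀ t, InT tlo thi t → |g t| ≤ C := by
    intro t ht
    by_cases hmem : t ∈ S
    · have : g t = t istar := Set.piecewise_eq_of_mem _ _ _ hmem
      rw [this]
      refine le_trans (habs t ht istar) (le_trans ?_
        (Finset.le_sup' (fun i => |tlo i| + |thi i| + |c i|) (Finset.mem_univ istar)))
      have := abs_nonneg (c istar); linarith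
    · have hgM : g t = M t := Set.piecewise_eq_of_notMem _ _ _ hmem
      obtain ⟨i₀, _, hi₀⟩ := Finset.exists_mem_eq_sup' Finset.univ_nonempty (fun i => t i - c i)
      rw [hgM, hM_def]
      simp only
      rw [hi₀]
      refine le_trans (abs_sub _ _) ?_
      refine le_trans (add_le_add (habs t ht i₀) le_rfl)
        (Finset.le_sup' (fun i => |tlo i| + |thi i| + |c i|) (Finset.mem_univ i₀))
  have hibound : ∀ t, InT tlo thi t → |t istar| ≤ C := by
    intro t ht
    refine le_trans (habs t ht istar) (le_trans ?_
      (Finset.le_sup' (fun i => |tlo i| + |thi i| + |c i|) (Finset.mem_univ istar)))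
    have := abs_nonneg (c istar); linarith
  -- part 2
  have part2 : ∀ P : Measure (ι → ℝ), InP tlo thi mlo mhi P →
      Finset.univ.sup' Finset.univ_nonempty mlo ≤ ∫ t, Pay c p q t ∂P := by
    intro P hP
    obtain ⟨hprob, haeT, hmean⟩ := hP
    have hgint : Integrable g P := by
      refine Integrable.mono' (integrable_const C) hg_meas.aestronglyMeasurable ?_
      exact haeT.mono fun t ht => by simpa using hgbound t ht
    have hiint : Integrable (fun t => t istar) P := by
      refine Integrable.mono' (integrable_const C)
        (measurable_pi_apply istar).aestronglyMeasurable ?_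
      exact haeT.mono fun t ht => by simpa using hibound t ht
    have heq : ∫ t, Pay c p q t ∂P = ∫ t, g t ∂P :=
      integral_congr_ae (haeT.mono fun t ht => (hkey t ht).1)
    have hmono : ∫ t, t istar ∂P ≤ ∫ t, g t ∂P :=
      integral_mono_ae hiint hgint (haeT.mono fun t ht => (hkey t ht).2)
    have hsup : Finset.univ.sup' Finset.univ_nonempty mlo = mlo istar :=
      le_antisymm (Finset.sup'_le _ _ fun i _ => hstar i)
        (Finset.le_sup' mlo (Finset.mem_univ istar))
    rw [heq, hsup]
    exact le_trans (hmean istar).1 hmono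
  refine ⟨part1, part2, ?_⟩
  -- part 3
  have hsup : Finset.univ.sup' Finset.univ_nonempty mlo = mlo istar :=
    le_antisymm (Finset.sup'_le _ _ fun i _ => hstar i)
      (Finset.le_sup' mlo (Finset.mem_univ istar))
  have hInT : InT tlo thi mlo := by
    intro i
    exact ⟨le_of_lt (h1 i), le_of_lt (lt_of_le_of_lt (h2 i) (h3 i))⟩
  have hδ : InP tlo thi mlo mhi (Measure.dirac mlo) := by
    refine ⟨Measure.dirac.isProbabilityMeasure, ?_, ?_⟩
    · rw [ae_dirac_eq]; exact Filter.eventually_pure.2 hInT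
    · intro i
      rw [integral_dirac (fun t => t i) mlo]
      exact ⟨le_refl _, h2 i⟩
  have hPayδ : ∫ t, Pay c p q t ∂(Measure.dirac mlo) = mlo istar := by
    rw [integral_dirac (Pay c p q) mlo]
    have hlt : maxOther c istar mlo < ν := by
      obtain ⟨j₀, hj₀⟩ := exists_ne istar
      have hne : (Finset.univ.erase istar).Nonempty :=
        ⟨j₀, Finset.mem_erase.2 ⟨hj₀, Finset.mem_univ _⟩⟩
      rw [maxOther_eq c istar mlo hne]
      rw [Finset.sup'_lt_iff]
      intro j _
      have : mlo j ≤ mlo istar := hstar j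
      have := hc j
      have := h2 istar
      have := h3 istar
      linarith
    exact pay_ruleI c p q istar mlo (hI mlo hInT hlt)
  have hvmem : Finset.univ.sup' Finset.univ_nonempty mlo ∈
      {x : ℝ | ∃ P : Measure (ι → ℝ), InP tlo thi mlo mhi P ∧
        x = ∫ t, Pay c p q t ∂P} := by
    exact ⟨Measure.dirac mlo, hδ, by rw [hPayδ, hsup]⟩
  have hlb : ∀ x ∈ {x : ℝ | ∃ P : Measure (ι → ℝ), InP tlo thi mlo mhi P ∧
      x = ∫ t, Pay c p q t ∂P}, Finset.univ.sup' Finset.univ_nonempty mlo ≤ x := by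
    rintro x ⟨P, hP, rfl⟩
    exact part2 P hP
  exact le_antisymm (csInf_le ⟨_, hlb⟩ hvmem) (le_csInf ⟨_, hvmem⟩ hlb)
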